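/- A pre-metric group (G,q) is weakly anisotropic if and only if for every prime p the p-primary component G_p of G, equipped with the restriction of q, is weakly anisotropic. -/

import Mathlib

/-- The bicharacter associated with a `kˣ`-valued function `q` on `G`:
`b(g,h) = q(g+h) · q(g)⁻¹ · q(h)⁻¹`. -/
def bchar {k : Type*} [Field k] {G : Type*} [AddCommGroup G] (q : G → kˣ) (g h : G) : kˣ :=
  q (g + h) * (q g)⁻¹ * (q h)⁻¹

/-- `q : G → kˣ` is a quadratic form: `q (-g) = q g` for all `g`, and the associated
function `bchar q` is bimultiplicative. -/
structure IsQuadForm {k : Type*} [Field k] {G : Type*} [AddCommGroup G] (q : G → kˣ) : Prop where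
  map_neg : ∀ g : G, q (-g) = q g
  bchar_add_left : ∀ g₁ g₂ h : G, bchar q (g₁ + g₂) h = bchar q g₁ h * bchar q g₂ h
  bchar_add_right : ∀ g h₁ h₂ : G, bchar q g (h₁ + h₂) = bchar q g h₁ * bchar q g h₂

/-- The Gauss sum `τ⁺(G,q) = ∑_{g ∈ G} q(g)`, as an element of `k`. -/
noncomputable def tauPlus {k : Type*} [Field k] {G : Type*} [AddCommGroup G] (q : G → kˣ) : k :=
  ∑ᶠ g : G, (q g : k)

/-- The Gauss sum `τ⁻(G,q) = ∑_{g ∈ G} q(g)⁻¹`, as an element of `k`. -/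
noncomputable def tauMinus {k : Type*} [Field k] {G : Type*} [AddCommGroup G] (q : G → kˣ) : k :=
  ∑ᶠ g : G, (((q g)⁻¹ : kˣ) : k)

/-- Non-degeneracy of (the bicharacter associated with) `q` : the map
`g ↦ b(g, ·)` from `G` to `Hom(G, kˣ)` is injective. -/
def Nondeg {k : Type*} [Field k] {G : Type*} [AddCommGroup G] (q : G → kˣ) : Prop :=
  Function.Injective fun g : G => fun h : G => bchar q g h

/-- Isomorphism of pre-metric groups: a group isomorphism `φ : G₁ ≃ G₂`
with `q₂ ∘ φ = q₁`. -/
def PMIso {k : Type*} [Field k] {G₁ : Type*} [AddCommGroup G₁] {G₂ : Type*} [AddCommGroup G₂]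
    (q₁ : G₁ → kˣ) (q₂ : G₂ → kˣ) : Prop :=
  ∃ φ : G₁ ≃+ G₂, ∀ g : G₁, q₂ (φ g) = q₁ g

/-- `(G,q)` is weakly anisotropic: it has no nonzero isotropic subgroup stable under
every automorphism of `(G,q)`. -/
def WeaklyAnisotropic {k : Type*} [Field k] {G : Type*} [AddCommGroup G] (q : G → kˣ) : Prop :=
  ∀ H : AddSubgroup G, (∀ h ∈ H, q h = 1) →
    (∀ φ : G ≃+ G, (∀ g : G, q (φ g) = q g) → ∀ h ∈ H, φ h ∈ H) →
    H = ⊥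


section Aux
variable {k : Type*} [Field k] {G : Type*} [AddCommGroup G] {q : G → kˣ}

lemma bchar_zero_left (hq : IsQuadForm q) (h : G) : bchar q 0 h = 1 := by
  have := hq.bchar_add_left 0 0 h
  rw [add_zero] at this
  exact (mul_eq_left.mp this.symm)

lemma bchar_zero_right (hq : IsQuadForm q) (g : G) : bchar q g 0 = 1 := by
  have := hq.bchar_add_right g 0 0
  rw [add_zero] at this
  exact (mul_eq_left.mp this.symm)

/-- left additive hom into `Additive kˣ` -/
def bcharHomLeft (hq : IsQuadForm q) (h : G) : G →+ Additive kˣ :=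
  AddMonoidHom.mk' (fun g => Additive.ofMul (bchar q g h)) (by
    intro a b
    simp [hq.bchar_add_left a b h, Additive.ofMul]
    rfl)

lemma bchar_zsmul_left (hq : IsQuadForm q) (n : ℤ) (g h : G) :
    bchar q (n • g) h = bchar q g h ^ n := by
  have := map_zsmul (bcharHomLeft hq h) n g
  simpa [bcharHomLeft, ← ofMul_zpow] using this

def bcharHomRight (hq : IsQuadForm q) (g : G) : G →+ Additive kˣ :=
  AddMonoidHom.mk' (fun h => Additive.ofMul (bchar q g h)) (by
    intro a b
    simp [hq.bchar_add_right g a b, Additive.ofMul]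
    rfl)

lemma bchar_zsmul_right (hq : IsQuadForm q) (n : ℤ) (g h : G) :
    bchar q g (n • h) = bchar q g h ^ n := by
  have := map_zsmul (bcharHomRight hq g) n h
  simpa [bcharHomRight, ← ofMul_zpow] using this

lemma bchar_eq_one_of_coprime (hq : IsQuadForm q) {A B : ℤ} {g h : G}
    (hA : A • g = 0) (hB : B • h = 0) (hco : IsCoprime A B) : bchar q g h = 1 := by
  obtain ⟨u, v, huv⟩ := hco
  have h1 : bchar q g h ^ A = 1 := by
    rw [← bchar_zsmul_left hq, hA, bchar_zero_left hq]
  have h2 : bchar q g h ^ B = 1 := by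
    rw [← bchar_zsmul_right hq, hB, bchar_zero_right hq]
  calc bchar q g h = bchar q g h ^ (u * A + v * B) := by rw [huv, zpow_one]
    _ = (bchar q g h ^ A) ^ u * (bchar q g h ^ B) ^ v := by
        rw [zpow_add, mul_comm u A, mul_comm v B, zpow_mul, zpow_mul]
    _ = 1 := by rw [h1, h2, one_zpow, one_zpow, mul_one]

lemma q_add_of_bchar_one {g h : G} (hb : bchar q g h = 1) : q (g + h) = q g * q h := by
  have : q (g + h) * (q g)⁻¹ * (q h)⁻¹ = 1 := hb
  have h2 : q (g + h) * ((q g)⁻¹ * (q h)⁻¹) = 1 := by rw [← mul_assoc]; exact this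
  have h3 := mul_eq_one_iff_eq_inv.mp h2
  rw [h3, mul_inv_rev, inv_inv, inv_inv, mul_comm]

end Aux

section Primary
variable {G : Type*} [AddCommGroup G]

/-- The `p`-primary component of `G`. -/
def primaryComp (G : Type*) [AddCommGroup G] (p : ℕ) : AddSubgroup G where
  carrier := {g | ∃ n : ℕ, p ^ n • g = 0}
  zero_mem' := ⟨0, smul_zero _⟩
  add_mem' := by
    rintro a b ⟨n, hn⟩ ⟨m, hm⟩
    refine ⟨n + m, ?_⟩
    rw [smul_add, pow_add, mul_comm, mul_smul, hn, smul_zero, zero_add,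
      mul_comm, mul_smul, hm, smul_zero]
  neg_mem' := by
    rintro a ⟨n, hn⟩
    exact ⟨n, by rw [smul_neg, hn, neg_zero]⟩

lemma mem_primaryComp {p : ℕ} {g : G} : g ∈ primaryComp G p ↔ ∃ n : ℕ, p ^ n • g = 0 :=
  Iff.rfl

end Primary

section Extension
variable {k : Type*} [Field k] {G : Type*} [AddCommGroup G] [Finite G] {q : G → kˣ}

lemma exists_extension (hq : IsQuadForm q) {p : ℕ} (hp : p.Prime)
    (ψ : ↥(primaryComp G p) ≃+ ↥(primaryComp G p))
    (hψ : ∀ x : ↥(primaryComp G p), q ((ψ x : ↥(primaryComp G p)) : G) = q (x : G)) :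
    ∃ φ : G ≃+ G, (∀ g : G, q (φ g) = q g) ∧
      ∀ x : ↥(primaryComp G p), φ (x : G) = ((ψ x : ↥(primaryComp G p)) : G) := by
  classical
  set N := Nat.card G with hN
  have hN0 : N ≠ 0 := Nat.card_pos.ne'
  set a := N.factorization p with ha
  set P := p ^ a with hPdef
  set m := N / P with hm
  have hPm : P * m = N := Nat.ordProj_mul_ordCompl_eq_self N p
  have hcoP : Nat.Coprime P m := (Nat.coprime_ordCompl hp hN0).pow_left a
  have hcoZ : IsCoprime (P : ℤ) (m : ℤ) := Nat.isCoprime_iff_coprime.mpr hcoP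
  obtain ⟨u, v, huv⟩ := id hcoZ
  have hNsmul : ∀ g : G, (N : ℤ) • g = 0 := by
    intro g
    rw [natCast_zsmul]
    exact card_nsmul_eq_zero'
  set πp : G → G := fun g => (v * (m : ℤ)) • g with hπp
  set πc : G → G := fun g => (u * (P : ℤ)) • g with hπc
  have memPp : ∀ g : G, πp g ∈ primaryComp G p := by
    intro g
    refine ⟨a, ?_⟩
    rw [← natCast_zsmul, hπp]
    simp only [smul_smul]
    have h1 : ((p ^ a : ℕ) : ℤ) * (v * (m : ℤ)) = v * (N : ℤ) := by
      rw [← hPm, hPdef]; push_cast; ring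
    rw [h1, mul_smul, hNsmul, smul_zero]
  have hPkill : ∀ x : G, x ∈ primaryComp G p → (P : ℤ) • x = 0 := by
    rintro x ⟨n, hn⟩
    have hd1 : addOrderOf x ∣ p ^ n := addOrderOf_dvd_of_nsmul_eq_zero hn
    have hd2 : addOrderOf x ∣ P * m := by rw [hPm]; exact addOrderOf_dvd_natCard x
    have hco' : Nat.Coprime (addOrderOf x) m :=
      Nat.Coprime.coprime_dvd_left hd1 (((Nat.coprime_ordCompl hp hN0)).pow_left n)
    have hdP : addOrderOf x ∣ P := (Nat.Coprime.dvd_of_dvd_mul_right hco' hd2)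
    rw [natCast_zsmul]
    exact addOrderOf_dvd_iff_nsmul_eq_zero.mp hdP
  have hπp_id : ∀ x : G, (P : ℤ) • x = 0 → πp x = x := by
    intro x hx
    have h1 : v * (m : ℤ) = 1 - u * (P : ℤ) := by linarith
    rw [hπp]; simp only
    rw [h1, sub_smul, one_smul, mul_smul, hx, smul_zero, sub_zero]
  have hπp_c : ∀ y : G, (m : ℤ) • y = 0 → πp y = 0 := by
    intro y hy
    rw [hπp]; simp only [mul_smul, hy, smul_zero]
  have hc_m : ∀ g : G, (m : ℤ) • πc g = 0 := by
    intro g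
    rw [hπc]; simp only [smul_smul]
    have h1 : (m : ℤ) * (u * (P : ℤ)) = u * (N : ℤ) := by
      rw [← hPm]; push_cast; ring
    rw [h1, mul_smul, hNsmul, smul_zero]
  have hπc_p : ∀ x : G, (P : ℤ) • x = 0 → πc x = 0 := by
    intro x hx
    rw [hπc]; simp only [mul_smul, hx, smul_zero]
  have hdecomp : ∀ g : G, πp g + πc g = g := by
    intro g
    rw [hπp, hπc]; simp only
    rw [← add_smul]
    have h1 : v * (m : ℤ) + u * (P : ℤ) = 1 := by linarith
    rw [h1, one_smul]
  have hπp_add : ∀ x y : G, πp (x + y) = πp x + πp y := by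
    intro x y; rw [hπp]; exact smul_add _ _ _
  have hπc_add : ∀ x y : G, πc (x + y) = πc x + πc y := by
    intro x y; rw [hπc]; exact smul_add _ _ _
  have hπc_idem : ∀ g : G, πc (πc g) = πc g := by
    intro g
    have h2 := hdecomp (πc g)
    rwa [hπp_c _ (hc_m g), zero_add] at h2
  have hmemkill : ∀ x : ↥(primaryComp G p), (P : ℤ) • (x : G) = 0 := fun x => hPkill x x.2
  have horth : ∀ x y : G, (P : ℤ) • x = 0 → (m : ℤ) • y = 0 → q (x + y) = q x * q y := by
    intro x y hx hy
    exact q_add_of_bchar_one (bchar_eq_one_of_coprime hq hx hy hcoZ)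
  set F : G → G := fun g => ((ψ ⟨πp g, memPp g⟩ : ↥(primaryComp G p)) : G) + πc g with hF
  set F' : G → G :=
    fun g => ((ψ.symm ⟨πp g, memPp g⟩ : ↥(primaryComp G p)) : G) + πc g with hF'
  have hπpF : ∀ g : G, πp (F g) = ((ψ ⟨πp g, memPp g⟩ : ↥(primaryComp G p)) : G) := by
    intro g
    rw [hF]; simp only
    rw [hπp_add, hπp_id _ (hmemkill _), hπp_c _ (hc_m g), add_zero]
  have hπcF : ∀ g : G, πc (F g) = πc g := by
    intro g
    rw [hF]; simp only
    rw [hπc_add, hπc_p _ (hmemkill _), hπc_idem, zero_add]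
  have hπpF' : ∀ g : G, πp (F' g) = ((ψ.symm ⟨πp g, memPp g⟩ : ↥(primaryComp G p)) : G) := by
    intro g
    rw [hF']; simp only
    rw [hπp_add, hπp_id _ (hmemkill _), hπp_c _ (hc_m g), add_zero]
  have hπcF' : ∀ g : G, πc (F' g) = πc g := by
    intro g
    rw [hF']; simp only
    rw [hπc_add, hπc_p _ (hmemkill _), hπc_idem, zero_add]
  have hFF' : ∀ g : G, F' (F g) = g := by
    intro g
    rw [hF']; simp only
    have e1 : (⟨πp (F g), memPp _⟩ : ↥(primaryComp G p)) = ψ ⟨πp g, memPp g⟩ :=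
      Subtype.ext (hπpF g)
    rw [e1, ψ.symm_apply_apply, hπcF]
    exact hdecomp g
  have hF'F : ∀ g : G, F (F' g) = g := by
    intro g
    rw [hF]; simp only
    have e1 : (⟨πp (F' g), memPp _⟩ : ↥(primaryComp G p)) = ψ.symm ⟨πp g, memPp g⟩ :=
      Subtype.ext (hπpF' g)
    rw [e1, ψ.apply_symm_apply, hπcF']
    exact hdecomp g
  refine ⟨{ toFun := F, invFun := F', left_inv := hFF', right_inv := hF'F,
            map_add' := ?_ }, ?_, ?_⟩
  · intro x y
    simp only [hF]
    have e1 : (⟨πp (x + y), memPp _⟩ : ↥(primaryComp G p))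
        = ⟨πp x, memPp x⟩ + ⟨πp y, memPp y⟩ := Subtype.ext (hπp_add x y)
    rw [e1, map_add, hπc_add]
    push_cast
    abel
  · intro g
    show q (F g) = q g
    rw [hF]; simp only
    rw [horth _ _ (hmemkill _) (hc_m g), hψ]
    have e2 : q ((⟨πp g, memPp g⟩ : ↥(primaryComp G p)) : G) = q (πp g) := rfl
    rw [e2, ← horth _ _ (hPkill _ (memPp g)) (hc_m g), hdecomp]
  · intro x
    show F (x : G) = _
    rw [hF]; simp only
    have e1 : (⟨πp (x : G), memPp _⟩ : ↥(primaryComp G p)) = x :=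
      Subtype.ext (hπp_id _ (hmemkill x))
    rw [e1, hπc_p _ (hmemkill x), add_zero]

end Extension

section PPart
variable {G : Type*} [AddCommGroup G] [Finite G]

lemma exists_pPart {p : ℕ} (hp : p.Prime) (h : G) :
    ∃ c : ℤ, c • h ∈ primaryComp G p ∧ (c • h = 0 → ¬ (p ∣ addOrderOf h)) := by
  set N := Nat.card G with hN
  have hN0 : N ≠ 0 := Nat.card_pos.ne'
  set a := N.factorization p with ha
  set P := p ^ a with hPdef
  set m := N / P with hm
  have hPm : P * m = N := Nat.ordProj_mul_ordCompl_eq_self N p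
  have hcoP : Nat.Coprime P m := (Nat.coprime_ordCompl hp hN0).pow_left a
  have hcop : Nat.Coprime p m := Nat.coprime_ordCompl hp hN0
  have hcoZ : IsCoprime (P : ℤ) (m : ℤ) := Nat.isCoprime_iff_coprime.mpr hcoP
  obtain ⟨u, v, huv⟩ := id hcoZ
  have hNsmul : ∀ g : G, (N : ℤ) • g = 0 := by
    intro g
    rw [natCast_zsmul]
    exact card_nsmul_eq_zero'
  refine ⟨v * (m : ℤ), ?_, ?_⟩
  · refine ⟨a, ?_⟩
    rw [← natCast_zsmul, smul_smul]
    have h1 : ((p ^ a : ℕ) : ℤ) * (v * (m : ℤ)) = v * (N : ℤ) := by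
      rw [← hPm, hPdef]; push_cast; ring
    rw [h1, mul_smul, hNsmul, smul_zero]
  · intro h0 hpd
    -- then m • h = 0
    have hmh : (m : ℤ) • h = 0 := by
      have hdec : (v * (m : ℤ)) • h + (u * (P : ℤ)) • h = h := by
        rw [← add_smul]
        have h1 : v * (m : ℤ) + u * (P : ℤ) = 1 := by linarith
        rw [h1, one_smul]
      rw [h0, zero_add] at hdec
      calc (m : ℤ) • h = (m : ℤ) • (u * (P : ℤ)) • h := by rw [hdec]
        _ = (u * (N : ℤ)) • h := by
            rw [smul_smul]; congr 1; rw [← hPm]; push_cast; ring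
        _ = 0 := by rw [mul_smul, hNsmul, smul_zero]
    have hdvd : addOrderOf h ∣ m := by
      have := hmh
      rw [natCast_zsmul] at this
      exact addOrderOf_dvd_of_nsmul_eq_zero this
    have hpm : p ∣ m := hpd.trans hdvd
    have h1 : p ∣ 1 := hcop ▸ Nat.dvd_gcd dvd_rfl hpm
    exact hp.one_lt.ne' (Nat.dvd_one.mp h1)

end PPart

/-- A pre-metric group `(G,q)` is weakly anisotropic iff for every
prime `p` the `p`-primary component of `G`, with the restriction of `q`, is weakly
anisotropic. -/
theorem weaklyAnisotropic_iff_primary_components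
    {k : Type*} [Field k] [IsAlgClosed k] [CharZero k]
    {G : Type*} [AddCommGroup G] [Finite G]
    (q : G → kˣ) (hq : IsQuadForm q) :
    WeaklyAnisotropic q ↔
      ∀ p : ℕ, p.Prime →
        ∀ Gp : AddSubgroup G, (∀ g : G, g ∈ Gp ↔ ∃ n : ℕ, p ^ n • g = 0) →
          WeaklyAnisotropic (fun x : ↥Gp => q (x : G)) := by
  constructor
  · intro hWA p hp Gp hGp H hiso hstab
    set H' : AddSubgroup G := H.map Gp.subtype with hH'
    have hH'iso : ∀ h ∈ H', q h = 1 := by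
      rintro h ⟨x, hx, rfl⟩
      exact hiso x hx
    have hH'stab : ∀ φ : G ≃+ G, (∀ g : G, q (φ g) = q g) → ∀ h ∈ H', φ h ∈ H' := by
      intro φ hφ h hh
      obtain ⟨x, hx, rfl⟩ := hh
      have hmapG : ∀ g : G, g ∈ Gp → φ g ∈ Gp := by
        intro g hg
        obtain ⟨n, hn⟩ := (hGp g).mp hg
        exact (hGp _).mpr ⟨n, by rw [← map_nsmul, hn, map_zero]⟩
      have hmapG' : ∀ g : G, g ∈ Gp → φ.symm g ∈ Gp := by
        intro g hg
        obtain ⟨n, hn⟩ := (hGp g).mp hg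
        exact (hGp _).mpr ⟨n, by rw [← map_nsmul, hn, map_zero]⟩
      set ψ : ↥Gp ≃+ ↥Gp :=
        { toFun := fun y => ⟨φ y, hmapG _ y.2⟩
          invFun := fun y => ⟨φ.symm y, hmapG' _ y.2⟩
          left_inv := by intro y; ext; simp
          right_inv := by intro y; ext; simp
          map_add' := by intro a b; ext; simp } with hψ
      have hψq : ∀ y : ↥Gp, (fun x : ↥Gp => q (x : G)) (ψ y) = (fun x : ↥Gp => q (x : G)) y := by
        intro y
        exact hφ y
      have hmem := hstab ψ hψq x hx
      exact ⟨ψ x, hmem, rfl⟩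
    have hbot := hWA H' hH'iso hH'stab
    rw [AddSubgroup.eq_bot_iff_forall]
    intro x hx
    have : (x : G) ∈ H' := ⟨x, hx, rfl⟩
    rw [hbot, AddSubgroup.mem_bot] at this
    exact Subtype.ext this
  · intro hcomp H hiso hstab
    rw [AddSubgroup.eq_bot_iff_forall]
    intro h hh
    by_contra hne
    have hn1 : addOrderOf h ≠ 1 := by
      intro h1
      exact hne (AddMonoid.addOrderOf_eq_one_iff.mp h1)
    obtain ⟨p, hp, hpd⟩ := Nat.exists_prime_and_dvd hn1
    have hWAp := hcomp p hp (primaryComp G p) (fun g => Iff.rfl)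
    set Hp : AddSubgroup ↥(primaryComp G p) := H.comap (primaryComp G p).subtype with hHp
    have hiso' : ∀ x ∈ Hp, q (x : G) = 1 := fun x hx => hiso _ hx
    have hstab' : ∀ ψ : ↥(primaryComp G p) ≃+ ↥(primaryComp G p),
        (∀ y : ↥(primaryComp G p), q ((ψ y : ↥(primaryComp G p)) : G) = q (y : G)) →
        ∀ x ∈ Hp, ψ x ∈ Hp := by
      intro ψ hψ x hx
      obtain ⟨φ, hφq, hφres⟩ := exists_extension hq hp ψ hψ
      have hmem := hstab φ hφq (x : G) hx
      show ((ψ x : ↥(primaryComp G p)) : G) ∈ H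
      rw [← hφres x]
      exact hmem
    have hbot := hWAp Hp hiso' hstab'
    obtain ⟨c, hc1, hc2⟩ := exists_pPart hp h
    have hcH : (⟨c • h, hc1⟩ : ↥(primaryComp G p)) ∈ Hp := by
      show c • h ∈ H
      exact zsmul_mem hh c
    rw [hbot, AddSubgroup.mem_bot] at hcH
    have hzero : c • h = 0 := congrArg Subtype.val hcH
    exact hc2 hzero hpd
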